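/- Let u be the map with u(e_i) = 0 for i ≤ r and u(e_{r+p}) = e_p on an (r+s)-dimensional space (r ≥ s). Let T* be a row-standard two-column tableau with first-column entries a*_1, …, a*_r and second-column entries b_1 < … < b_s satisfying a*_p < b_p. Then the dimension of the space of endomorphisms of V commuting with u and stabilizing every subspace of the flag F_{T*} equals #{(p,q) : 1 ≤ p,q ≤ r, s < q, a*_p ≤ a*_q} + #{(p,q) : 1 ≤ p ≤ r, 1 ≤ q ≤ s, a*_p < b_q} + #{(p,q) : 1 ≤ p ≤ q ≤ s, a*_p ≤ a*_q}. -/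

import Mathlib

open Module

/-- Entry map of a two-column tableau with first-column entries `a` and second-column
entries `b` (all 0-indexed). -/
def entryOf (r s : ℕ) (a : Fin r → Fin (r + s)) (b : Fin s → Fin (r + s)) :
    Fin (r + s) → Fin (r + s) := fun x =>
  if h : x.val < r then a ⟨x.val, h⟩ else b ⟨x.val - r, by have := x.isLt; omega⟩

/-- The flag associated to a tableau with entry map `entry`: its `k`-th subspace is
spanned by the standard basis vectors whose (0-indexed) entry is `< k`. -/
noncomputable def flagOf (K : Type*) [Field K] (n : ℕ) (entry : Fin n → Fin n) (k : ℕ) :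
    Submodule K (Fin n → K) :=
  Submodule.span K ((fun x => Pi.single x (1 : K)) '' {x | (entry x).val < k})

/-- The space of endomorphisms commuting with `u` and stabilizing each subspace `Vk k`. -/
def stabSp (K : Type*) [Field K] (n : ℕ) (u : Module.End K (Fin n → K))
    (Vk : ℕ → Submodule K (Fin n → K)) : Submodule K (Module.End K (Fin n → K)) where
  carrier := {g | u ∘ₗ g = g ∘ₗ u ∧ ∀ k, ∀ x ∈ Vk k, g x ∈ Vk k}
  add_mem' := by
    rintro a b ⟨ha1, ha2⟩ ⟨hb1, hb2⟩
    refine ⟨?_, fun k x hx => (Vk k).add_mem (ha2 k x hx) (hb2 k x hx)⟩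
    rw [LinearMap.comp_add, LinearMap.add_comp, ha1, hb1]
  zero_mem' := by
    refine ⟨?_, fun k x hx => by simpa using (Vk k).zero_mem⟩
    ext v; simp
  smul_mem' := by
    rintro c a ⟨ha1, ha2⟩
    refine ⟨?_, fun k x hx => by simpa using (Vk k).smul_mem c (ha2 k x hx)⟩
    rw [LinearMap.comp_smul, LinearMap.smul_comp, ha1]

section Aux
variable {K : Type*} [Field K] {r s : ℕ}

lemma my_u_apply (u : Module.End K (Fin (r+s) → K))
    (hu : ∀ x : Fin (r + s), u (Pi.single x 1) =
      if h : r ≤ x.val then Pi.single (⟨x.val - r, Nat.lt_of_le_of_lt (Nat.sub_le _ _) x.isLt⟩ : Fin (r + s)) 1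
      else 0) (v : Fin (r+s) → K) (y : Fin (r+s)) :
    u v y = if h : y.val < s then v ⟨r + y.val, by omega⟩ else 0 := by
  have hv : v = ∑ x, v x • (Pi.single x (1:K) : Fin (r+s) → K) := by
    funext j
    rw [Finset.sum_apply]
    simp [Pi.single_apply]
  conv_lhs => rw [hv]
  rw [map_sum, Finset.sum_apply]
  simp only [map_smul, hu, Pi.smul_apply, dite_apply, smul_dite, smul_zero, Pi.zero_apply]
  by_cases h : y.val < s
  · rw [dif_pos h]
    rw [Finset.sum_eq_single (⟨r + y.val, by omega⟩ : Fin (r+s))]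
    · rw [dif_pos (by simp)]
      simp [Pi.single_apply, Fin.ext_iff]
    · intro x _ hx
      by_cases hr : r ≤ x.val
      · rw [dif_pos hr]
        have hne : y ≠ (⟨x.val - r, by have := x.isLt; omega⟩ : Fin (r+s)) := by
          intro hc
          have hval : y.val = x.val - r := by simpa using congrArg Fin.val hc
          exact hx (Fin.ext (by simp; omega))
        simp [Pi.single_apply, hne]
      · rw [dif_neg hr]
    · simp
  · rw [dif_neg h]
    apply Finset.sum_eq_zero
    intro x _
    by_cases hr : r ≤ x.val
    · rw [dif_pos hr]
      have hne : y ≠ (⟨x.val - r, by have := x.isLt; omega⟩ : Fin (r+s)) := by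
        intro hc
        have hval : y.val = x.val - r := by simpa using congrArg Fin.val hc
        have := x.isLt
        omega
      simp [Pi.single_apply, hne]
    · rw [dif_neg hr]

end Aux

section Aux2
variable {K : Type*} [Field K] {n : ℕ}

lemma my_mem_flagOf (entry : Fin n → Fin n) (k : ℕ) (v : Fin n → K)
    (hv : ∀ y, k ≤ (entry y).val → v y = 0) : v ∈ flagOf K n entry k := by
  have hv' : v = ∑ x, v x • (Pi.single x (1:K) : Fin n → K) := by
    funext j
    rw [Finset.sum_apply]
    simp [Pi.single_apply]
  rw [hv']
  apply Submodule.sum_mem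
  intro x _
  by_cases h : (entry x).val < k
  · exact Submodule.smul_mem _ _ (Submodule.subset_span ⟨x, h, rfl⟩)
  · rw [hv x (by omega), zero_smul]
    exact Submodule.zero_mem _

lemma my_flagOf_apply (entry : Fin n → Fin n) (k : ℕ) (v : Fin n → K)
    (hv : v ∈ flagOf K n entry k) (y : Fin n) (hy : k ≤ (entry y).val) : v y = 0 := by
  induction hv using Submodule.span_induction with
  | mem w hw =>
    obtain ⟨x, hx, rfl⟩ := hw
    have hx' : (entry x).val < k := hx
    have : y ≠ x := fun hc => by rw [hc] at hy; omega
    simp [Pi.single_apply, this]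
  | zero => rfl
  | add w₁ w₂ _ _ h1 h2 => simp [h1, h2]
  | smul c w _ h => simp [h]

end Aux2

section Aux3
variable {K : Type*} [Field K] {r s : ℕ}

lemma my_stab_iff (u : Module.End K (Fin (r+s) → K))
    (hu : ∀ x : Fin (r + s), u (Pi.single x 1) =
      if h : r ≤ x.val then Pi.single (⟨x.val - r, Nat.lt_of_le_of_lt (Nat.sub_le _ _) x.isLt⟩ : Fin (r + s)) 1
      else 0)
    (entry : Fin (r+s) → Fin (r+s)) (g : Module.End K (Fin (r+s) → K)) :
    g ∈ stabSp K (r+s) u (flagOf K (r+s) entry) ↔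
    ((∀ x y : Fin (r+s),
        (if h : y.val < s then g (Pi.single x 1) ⟨r + y.val, by omega⟩ else 0)
        = (if h : r ≤ x.val then
            g (Pi.single (⟨x.val - r, Nat.lt_of_le_of_lt (Nat.sub_le _ _) x.isLt⟩ : Fin (r+s)) 1) y else 0))
     ∧ ∀ x y : Fin (r+s), ((entry x) : ℕ) < ((entry y) : ℕ) → g (Pi.single x 1) y = 0) := by
  constructor
  · rintro ⟨h1, h2⟩
    constructor
    · intro x y
      have hc := congrFun (congrArg (fun (f : Module.End K (Fin (r+s) → K)) =>
        f (Pi.single x 1)) h1) y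
      simp only [LinearMap.comp_apply] at hc
      rw [my_u_apply u hu] at hc
      rw [hu x] at hc
      by_cases hx : r ≤ x.val
      · rw [dif_pos hx] at hc ⊢
        exact hc
      · rw [dif_neg hx] at hc ⊢
        simpa using hc
    · intro x y hxy
      have hEx : (Pi.single x (1:K) : Fin (r+s) → K) ∈
          flagOf K (r+s) entry ((entry x).val + 1) := by
        apply my_mem_flagOf
        intro y' hy'
        have : y' ≠ x := fun hc => by rw [hc] at hy'; omega
        simp [Pi.single_apply, this]
      exact my_flagOf_apply entry _ _ (h2 _ _ hEx) y (by omega)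
  · rintro ⟨h1, h2⟩
    constructor
    · apply Basis.ext (Pi.basisFun K (Fin (r+s)))
      intro x
      funext y
      simp only [Pi.basisFun_apply, LinearMap.comp_apply]
      rw [my_u_apply u hu, hu x]
      have := h1 x y
      by_cases hx : r ≤ x.val
      · rw [dif_pos hx] at this ⊢
        rw [this]
      · rw [dif_neg hx] at this ⊢
        rw [this]
        simp
    · intro k v hv
      have hle : flagOf K (r+s) entry k ≤ (flagOf K (r+s) entry k).comap g := by
        rw [flagOf, Submodule.span_le]
        rintro w ⟨x, hx, rfl⟩
        have hx' : (entry x).val < k := hx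
        apply my_mem_flagOf
        intro y hy
        exact h2 x y (by omega)
      exact hle hv

end Aux3

set_option maxHeartbeats 8000000 in
/-- for the two-column nilpotent `u` and a row-standard tableau `T*`
(first-column entries `astar`, second-column entries `b`, 0-indexed) with associated flag
`F_{T*}`, the dimension of the space of endomorphisms commuting with `u` and stabilizing
the flag equals
`#{(p,q) : 1 ≤ p,q ≤ r, s < q, a*_p ≤ a*_q} + #{(p,q) : p ≤ r, q ≤ s, a*_p < b_q}
  + #{(p,q) : 1 ≤ p ≤ q ≤ s, a*_p ≤ a*_q}`. -/
theorem stmt14 (K : Type*) [Field K] (r s : ℕ) (hrs : s ≤ r)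
    (u : Module.End K (Fin (r + s) → K))
    (hu : ∀ x : Fin (r + s), u (Pi.single x 1) =
      if h : r ≤ x.val then Pi.single (⟨x.val - r, by have := x.isLt; omega⟩ : Fin (r + s)) 1
      else 0)
    (astar : Fin r → Fin (r + s)) (b : Fin s → Fin (r + s))
    (hb : StrictMono b)
    (hbij : Function.Bijective (entryOf r s astar b))
    (hrow : ∀ p : Fin s, astar (Fin.castLE hrs p) < b p) :
    finrank K ↥(stabSp K (r + s) u (flagOf K (r + s) (entryOf r s astar b)))
      = Set.ncard {pq : Fin r × Fin r | s ≤ pq.2.val ∧ astar pq.1 ≤ astar pq.2}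
        + Set.ncard {pq : Fin r × Fin s | astar pq.1 < b pq.2}
        + Set.ncard {pq : Fin s × Fin s | pq.1 ≤ pq.2 ∧
            astar (Fin.castLE hrs pq.1) ≤ astar (Fin.castLE hrs pq.2)} := by
    classical
  set entry := entryOf r s astar b with hentry
  have he1 : ∀ (x : Fin (r+s)) (h : x.val < r), entry x = astar ⟨x.val, h⟩ := by
    intro x h
    rw [hentry]
    unfold entryOf
    rw [dif_pos h]
  have he2 : ∀ (x : Fin (r+s)) (h : r ≤ x.val),
      entry x = b ⟨x.val - r, by have := x.isLt; omega⟩ := by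
    intro x h
    rw [hentry]
    unfold entryOf
    rw [dif_neg (by omega)]
  have hinj : Function.Injective entry := hbij.1
  have hab : ∀ (p : Fin r) (q : Fin s), astar p ≠ b q := by
    intro p q hc
    have h1 : entry ⟨p.val, by have := p.isLt; omega⟩ = astar p := he1 _ p.isLt
    have h2 : entry ⟨r + q.val, by have := q.isLt; omega⟩ = b q := by
      rw [he2 _ (Nat.le_add_right r q.val)]
      congr 1
      exact Fin.ext (by simp)
    have h3 := hinj (h1.trans (hc.trans h2.symm))
    have h4 : p.val = r + q.val := by
      have := congrArg Fin.val h3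
      simpa using this
    have := p.isLt
    omega
  have hlt : ∀ (p : Fin r) (q : Fin s), astar p ≤ b q → astar p < b q :=
    fun p q h => lt_of_le_of_ne h (hab p q)
  set S1 : Set (Fin r × Fin r) := {pq | s ≤ pq.2.val ∧ astar pq.1 ≤ astar pq.2} with hS1
  set S2 : Set (Fin r × Fin s) := {pq | astar pq.1 < b pq.2} with hS2
  set S3 : Set (Fin s × Fin s) := {pq | pq.1 ≤ pq.2 ∧
      astar (Fin.castLE hrs pq.1) ≤ astar (Fin.castLE hrs pq.2)} with hS3
  haveI : Fintype ↥S1 := Fintype.ofFinite _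
  haveI : Fintype ↥S2 := Fintype.ofFinite _
  haveI : Fintype ↥S3 := Fintype.ofFinite _
  let Φ : ↥(stabSp K (r + s) u (flagOf K (r + s) entry)) →ₗ[K] ((↥S1 ⊕ ↥S2 ⊕ ↥S3) → K) :=
    { toFun := fun g => Sum.elim
        (fun t => (g : Module.End K (Fin (r+s) → K))
            (Pi.single (⟨t.1.2.val, by have := t.1.2.isLt; omega⟩ : Fin (r+s)) 1)
            ⟨t.1.1.val, by have := t.1.1.isLt; omega⟩)
        (Sum.elim
          (fun t => (g : Module.End K (Fin (r+s) → K))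
            (Pi.single (⟨r + t.1.2.val, by have := t.1.2.isLt; omega⟩ : Fin (r+s)) 1)
            ⟨t.1.1.val, by have := t.1.1.isLt; omega⟩)
          (fun t => (g : Module.End K (Fin (r+s) → K))
            (Pi.single (⟨t.1.2.val, by have := t.1.2.isLt; omega⟩ : Fin (r+s)) 1)
            ⟨t.1.1.val, by have := t.1.1.isLt; omega⟩))
      map_add' := by
        intro a c
        funext σ
        rcases σ with t | t | t <;> simp
      map_smul' := by
        intro m a
        funext σ
        rcases σ with t | t | t <;> simp }
  have hinjΦ : Function.Injective Φ := by
    rw [injective_iff_map_eq_zero]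
    intro g hg
    obtain ⟨hcomm, hD⟩ := (my_stab_iff u hu entry g.1).mp g.2
    have hΦ : ∀ σ, Φ g σ = 0 := fun σ => congrFun hg σ
    have hΦ1 : ∀ (p q : Fin r), s ≤ q.val → astar p ≤ astar q →
        g.1 (Pi.single (⟨q.val, by have := q.isLt; omega⟩ : Fin (r+s)) 1)
          ⟨p.val, by have := p.isLt; omega⟩ = 0 := by
      intro p q h1 h2
      exact hΦ (Sum.inl ⟨(p, q), ⟨h1, h2⟩⟩)
    have hΦ2 : ∀ (p : Fin r) (q : Fin s), astar p < b q →
        g.1 (Pi.single (⟨r + q.val, by have := q.isLt; omega⟩ : Fin (r+s)) 1)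
          ⟨p.val, by have := p.isLt; omega⟩ = 0 := by
      intro p q h1
      exact hΦ (Sum.inr (Sum.inl ⟨(p, q), h1⟩))
    have hΦ3 : ∀ (p q : Fin s), p.val ≤ q.val →
        astar (Fin.castLE hrs p) ≤ astar (Fin.castLE hrs q) →
        g.1 (Pi.single (⟨q.val, by have := q.isLt; omega⟩ : Fin (r+s)) 1)
          ⟨p.val, by have := p.isLt; omega⟩ = 0 := by
      intro p q h1 h2
      exact hΦ (Sum.inr (Sum.inr ⟨(p, q), ⟨h1, h2⟩⟩))
    have hA : ∀ (x y : Fin (r+s)) (hy : y.val < s) (hx : r ≤ x.val),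
        g.1 (Pi.single x 1) ⟨r + y.val, by omega⟩
        = g.1 (Pi.single (⟨x.val - r, by have := x.isLt; omega⟩ : Fin (r+s)) 1) y := by
      intro x y hy hx
      have h := hcomm x y
      rw [dif_pos hy, dif_pos hx] at h
      exact h
    have hB : ∀ (x y : Fin (r+s)) (hy : y.val < s) (hx : ¬ r ≤ x.val),
        g.1 (Pi.single x 1) ⟨r + y.val, by omega⟩ = 0 := by
      intro x y hy hx
      have h := hcomm x y
      rwa [dif_pos hy, dif_neg hx] at h
    have hC : ∀ (x y : Fin (r+s)) (hy : ¬ y.val < s) (hx : r ≤ x.val),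
        g.1 (Pi.single (⟨x.val - r, by have := x.isLt; omega⟩ : Fin (r+s)) 1) y = 0 := by
      intro x y hy hx
      have h := hcomm x y
      rw [dif_neg hy, dif_pos hx] at h
      exact h.symm
    apply Subtype.ext
    show g.1 = 0
    apply Basis.ext (Pi.basisFun K (Fin (r+s)))
    intro x
    funext y
    simp only [Pi.basisFun_apply, LinearMap.zero_apply, Pi.zero_apply]
    by_cases hDxy : ((entry x) : ℕ) < ((entry y) : ℕ)
    · exact hD x y hDxy
    push_neg at hDxy
    by_cases hys : y.val < s
    · have hyr : y.val < r := by omega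
      by_cases hxr : x.val < r
      · have hle : astar ⟨y.val, hyr⟩ ≤ astar ⟨x.val, hxr⟩ := by
          rw [he1 y hyr, he1 x hxr] at hDxy
          exact hDxy
        by_cases hxs : x.val < s
        · by_cases hyx : y.val ≤ x.val
          · exact hΦ3 ⟨y.val, hys⟩ ⟨x.val, hxs⟩ hyx hle
          · have hrx : r + x.val < r + s := by omega
            have hry : r + y.val < r + s := by omega
            have hm := hA ⟨r + x.val, hrx⟩ y hys (Nat.le_add_right r x.val)
            simp only [Nat.add_sub_cancel_left, Fin.eta] at hm
            rw [← hm]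
            apply hD
            rw [he2 ⟨r + x.val, hrx⟩ (Nat.le_add_right r x.val),
              he2 ⟨r + y.val, hry⟩ (Nat.le_add_right r y.val)]
            have hbb : b ⟨x.val, hxs⟩ < b ⟨y.val, hys⟩ := hb (show x.val < y.val by omega)
            simp only [Nat.add_sub_cancel_left]
            exact hbb
        · exact hΦ1 ⟨y.val, hyr⟩ ⟨x.val, hxr⟩ (show s ≤ x.val by omega) hle
      · have hxrs : x.val - r < s := by have := x.isLt; omega
        have hlt' : astar ⟨y.val, hyr⟩ < b ⟨x.val - r, by omega⟩ := by
          apply hlt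
          rw [he1 y hyr, he2 x (by omega)] at hDxy
          exact hDxy
        have h9 := hΦ2 ⟨y.val, hyr⟩ ⟨x.val - r, hxrs⟩ hlt'
        have hidx : (⟨r + (x.val - r), by omega⟩ : Fin (r+s)) = x :=
          Fin.ext (by simp; omega)
        rwa [hidx] at h9
    · by_cases hyr : y.val < r
      · by_cases hxs : x.val < s
        · have hrx : r + x.val < r + s := by omega
          have h9 := hC ⟨r + x.val, hrx⟩ y hys (Nat.le_add_right r x.val)
          simp only [Nat.add_sub_cancel_left, Fin.eta] at h9
          exact h9
        · by_cases hxr : x.val < r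
          · have hle : astar ⟨y.val, hyr⟩ ≤ astar ⟨x.val, hxr⟩ := by
              rw [he1 y hyr, he1 x hxr] at hDxy
              exact hDxy
            exact hΦ1 ⟨y.val, hyr⟩ ⟨x.val, hxr⟩ (show s ≤ x.val by omega) hle
          · have hxrs : x.val - r < s := by have := x.isLt; omega
            have hlt' : astar ⟨y.val, hyr⟩ < b ⟨x.val - r, by omega⟩ := by
              apply hlt
              rw [he1 y hyr, he2 x (by omega)] at hDxy
              exact hDxy
            have h9 := hΦ2 ⟨y.val, hyr⟩ ⟨x.val - r, hxrs⟩ hlt'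
            have hidx : (⟨r + (x.val - r), by omega⟩ : Fin (r+s)) = x :=
              Fin.ext (by simp; omega)
            rwa [hidx] at h9
      · have hyv : y.val - r < s := by have := y.isLt; omega
        have hyvr : y.val - r < r := by omega
        have hyvn : y.val - r < r + s := by omega
        by_cases hxr : r ≤ x.val
        · have hxv : x.val - r < s := by have := x.isLt; omega
          have hxvr : x.val - r < r := by omega
          have hm := hA x ⟨y.val - r, hyvn⟩ hyv hxr
          have hidx : (⟨r + (y.val - r), by omega⟩ : Fin (r+s)) = y := Fin.ext (by simp; omega)
          rw [hidx] at hm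
          rw [hm]
          have hyx : y.val - r ≤ x.val - r := by
            rw [he2 y (by omega), he2 x hxr] at hDxy
            exact (hb.le_iff_le (a := ⟨y.val - r, hyv⟩) (b := ⟨x.val - r, hxv⟩)).mp hDxy
          by_cases ha : astar ⟨y.val - r, hyvr⟩ ≤ astar ⟨x.val - r, hxvr⟩
          · exact hΦ3 ⟨y.val - r, hyv⟩ ⟨x.val - r, hxv⟩ hyx ha
          · apply hD
            push_neg at ha
            rw [he1 ⟨x.val - r, by omega⟩ hxvr, he1 ⟨y.val - r, by omega⟩ hyvr]
            exact ha
        · have h9 := hB x ⟨y.val - r, hyvn⟩ hyv hxr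
          have hidx : (⟨r + (y.val - r), by omega⟩ : Fin (r+s)) = y := Fin.ext (by simp; omega)
          rwa [hidx] at h9
  have hsurjΦ : Function.Surjective Φ := by
    intro c
    have hsubs : ∀ (x : Fin (r+s)), ¬ x.val < r → x.val - r < s := fun x hx => by
      have := x.isLt; omega
    have hsubr : ∀ (x : Fin (r+s)), x.val - r < r := fun x => by
      have := x.isLt; omega
    set N : Matrix (Fin (r+s)) (Fin (r+s)) K := fun y x =>
      if hy : y.val < r then
        if hx : x.val < r then
          if hxs : x.val < s then
            if hys : y.val < s then
              if h : y.val ≤ x.val ∧ astar ⟨y.val, hy⟩ ≤ astar ⟨x.val, hx⟩ then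
                c (Sum.inr (Sum.inr ⟨(⟨y.val, hys⟩, ⟨x.val, hxs⟩), ⟨h.1, h.2⟩⟩))
              else 0
            else 0
          else
            if h : astar ⟨y.val, hy⟩ ≤ astar ⟨x.val, hx⟩ then
              c (Sum.inl ⟨(⟨y.val, hy⟩, ⟨x.val, hx⟩), ⟨show s ≤ x.val by omega, h⟩⟩)
            else 0
        else
          if h : astar ⟨y.val, hy⟩ < b ⟨x.val - r, hsubs x hx⟩ then
            c (Sum.inr (Sum.inl ⟨(⟨y.val, hy⟩, ⟨x.val - r, hsubs x hx⟩), h⟩))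
          else 0
      else
        if hx : x.val < r then 0
        else
          if h : y.val - r ≤ x.val - r ∧
              astar ⟨y.val - r, hsubr y⟩ ≤ astar ⟨x.val - r, hsubr x⟩ then
            c (Sum.inr (Sum.inr ⟨(⟨y.val - r, hsubs y hy⟩, ⟨x.val - r, hsubs x hx⟩),
              ⟨h.1, h.2⟩⟩))
          else 0
      with hNdef
    have hN : ∀ (x y : Fin (r+s)), (Matrix.mulVecLin N) (Pi.single x 1) y = N y x := by
      intro x y
      rw [Matrix.mulVecLin_apply, Matrix.mulVec_single]
      exact mul_one _
    have hcomm : ∀ x y : Fin (r+s),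
        (if h : y.val < s then (Matrix.mulVecLin N) (Pi.single x 1) ⟨r + y.val, by omega⟩ else 0)
        = (if h : r ≤ x.val then
            (Matrix.mulVecLin N)
              (Pi.single (⟨x.val - r, by have := x.isLt; omega⟩ : Fin (r+s)) 1) y else 0) := by
      intro x y
      have hxlt := x.isLt
      have hylt := y.isLt
      by_cases hy : y.val < s
      · rw [dif_pos hy]
        by_cases hx : r ≤ x.val
        · rw [dif_pos hx, hN, hN]
          simp only [hNdef, Nat.add_sub_cancel_left]
          rw [dif_neg (show ¬(r + y.val < r) by omega),
            dif_neg (show ¬(x.val < r) by omega),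
            dif_pos (show y.val < r by omega),
            dif_pos (show x.val - r < r by omega),
            dif_pos (show x.val - r < s by omega), dif_pos hy]
        · rw [dif_neg hx, hN]
          simp only [hNdef]
          rw [dif_neg (show ¬(r + y.val < r) by omega), dif_pos (show x.val < r by omega)]
      · rw [dif_neg hy]
        by_cases hx : r ≤ x.val
        · rw [dif_pos hx, hN]
          simp only [hNdef]
          by_cases hyr : y.val < r
          · rw [dif_pos hyr, dif_pos (show x.val - r < r by omega),
              dif_pos (show x.val - r < s by omega), dif_neg hy]
          · rw [dif_neg hyr, dif_pos (show x.val - r < r by omega)]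
        · rw [dif_neg hx]
    have hflag : ∀ x y : Fin (r+s), ((entry x) : ℕ) < ((entry y) : ℕ) →
        (Matrix.mulVecLin N) (Pi.single x 1) y = 0 := by
      intro x y hlt2
      have hxlt := x.isLt
      have hylt := y.isLt
      rw [hN]
      simp only [hNdef]
      by_cases hyr : y.val < r
      · rw [dif_pos hyr]
        by_cases hxr : x.val < r
        · rw [dif_pos hxr]
          have hlt2' : ((astar ⟨x.val, hxr⟩ : Fin (r+s)) : ℕ)
              < ((astar ⟨y.val, hyr⟩ : Fin (r+s)) : ℕ) := by
            rw [he1 x hxr, he1 y hyr] at hlt2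
            exact hlt2
          by_cases hxs : x.val < s
          · rw [dif_pos hxs]
            by_cases hys : y.val < s
            · rw [dif_pos hys, dif_neg]
              rintro ⟨-, h2⟩
              rw [Fin.le_def] at h2
              omega
            · rw [dif_neg hys]
          · rw [dif_neg hxs, dif_neg]
            intro h2
            rw [Fin.le_def] at h2
            omega
        · rw [dif_neg hxr, dif_neg]
          intro h2
          rw [Fin.lt_def] at h2
          have hlt2' : ((b ⟨x.val - r, hsubs x hxr⟩ : Fin (r+s)) : ℕ)
              < ((astar ⟨y.val, hyr⟩ : Fin (r+s)) : ℕ) := by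
            rw [he2 x (by omega), he1 y hyr] at hlt2
            exact hlt2
          omega
      · rw [dif_neg hyr]
        by_cases hxr : x.val < r
        · rw [dif_pos hxr]
        · rw [dif_neg hxr, dif_neg]
          rintro ⟨h1, -⟩
          have hlt2' : ((b ⟨x.val - r, hsubs x hxr⟩ : Fin (r+s)) : ℕ)
              < ((b ⟨y.val - r, hsubs y hyr⟩ : Fin (r+s)) : ℕ) := by
            rw [he2 x (by omega), he2 y (by omega)] at hlt2
            exact hlt2
          have h3 : x.val - r < y.val - r :=
            hb.lt_iff_lt.mp (show (b ⟨x.val - r, hsubs x hxr⟩) < b ⟨y.val - r, hsubs y hyr⟩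
              from hlt2')
          omega
    refine ⟨⟨Matrix.mulVecLin N, (my_stab_iff u hu entry _).mpr ⟨hcomm, hflag⟩⟩, ?_⟩
    funext σ
    rcases σ with t | t | t
    · obtain ⟨⟨p, q⟩, hpq⟩ := t
      have h1 : s ≤ q.val := hpq.1
      have h2 : astar p ≤ astar q := hpq.2
      show (Matrix.mulVecLin N)
        (Pi.single (⟨q.val, by have := q.isLt; omega⟩ : Fin (r+s)) 1)
        ⟨p.val, by have := p.isLt; omega⟩ = _
      rw [hN]
      simp only [hNdef]
      rw [dif_pos p.isLt, dif_pos q.isLt, dif_neg (show ¬(q.val < s) by omega), dif_pos h2]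
    · obtain ⟨⟨p, q⟩, hpq⟩ := t
      have h2 : astar p < b q := hpq
      show (Matrix.mulVecLin N)
        (Pi.single (⟨r + q.val, by have := q.isLt; omega⟩ : Fin (r+s)) 1)
        ⟨p.val, by have := p.isLt; omega⟩ = _
      rw [hN]
      simp only [hNdef, Nat.add_sub_cancel_left]
      rw [dif_pos p.isLt, dif_neg (show ¬(r + q.val < r) by omega), dif_pos h2]
    · obtain ⟨⟨p, q⟩, hpq⟩ := t
      have h1 : p.val ≤ q.val := hpq.1
      have h2 : astar (Fin.castLE hrs p) ≤ astar (Fin.castLE hrs q) := hpq.2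
      show (Matrix.mulVecLin N)
        (Pi.single (⟨q.val, by have := q.isLt; omega⟩ : Fin (r+s)) 1)
        ⟨p.val, by have := p.isLt; omega⟩ = _
      rw [hN]
      simp only [hNdef]
      rw [dif_pos (lt_of_lt_of_le p.isLt hrs), dif_pos (lt_of_lt_of_le q.isLt hrs),
        dif_pos q.isLt, dif_pos p.isLt,
        dif_pos (show p.val ≤ q.val ∧ astar ⟨p.val, lt_of_lt_of_le p.isLt hrs⟩
          ≤ astar ⟨q.val, lt_of_lt_of_le q.isLt hrs⟩ from ⟨h1, h2⟩)]
  have e := LinearEquiv.ofBijective Φ ⟨hinjΦ, hsurjΦ⟩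
  rw [e.finrank_eq, Module.finrank_pi, Fintype.card_sum, Fintype.card_sum]
  have c1 : S1.ncard = Fintype.card ↥S1 := by
    rw [Set.ncard_eq_toFinset_card', Set.toFinset_card]
  have c2 : S2.ncard = Fintype.card ↥S2 := by
    rw [Set.ncard_eq_toFinset_card', Set.toFinset_card]
  have c3 : S3.ncard = Fintype.card ↥S3 := by
    rw [Set.ncard_eq_toFinset_card', Set.toFinset_card]
  omega
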